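/- Let F be a field of characteristic zero and J an infinite set. The trace form κ on sl_J(F), defined by κ(f, g) = tr(f ∘ g), is invariant under all derivations of sl_J(F): for every derivation D of sl_J(F) and all f, g ∈ sl_J(F), one has κ(D f, g) + κ(f, D g) = 0. -/

import Mathlib

set_option maxHeartbeats 1000000
set_option synthInstance.maxHeartbeats 1000000

attribute [local instance 100] LieRing.ofAssociativeRing

/-- An `F`-linear endomorphism `f` of `ι →₀ F` is *finitary* if the set of pairs `(i, j)`
with `(f eⱼ) i ≠ 0` (where `eⱼ = single j 1` are the standard basis vectors) is finite. -/
def Finitary (F : Type*) [Field F] {ι : Type*} (f : Module.End F (ι →₀ F)) : Prop :=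
  {p : ι × ι | f (Finsupp.single p.2 1) p.1 ≠ 0}.Finite

/-- The trace of a (finitary) endomorphism of `ι →₀ F`. -/
noncomputable def trF (F : Type*) [Field F] {ι : Type*} (f : Module.End F (ι →₀ F)) : F :=
  ∑ᶠ j, f (Finsupp.single j 1) j

section SL

variable {F : Type*} [Field F] {ι : Type*}

lemma end_apply_eq_sum (f : Module.End F (ι →₀ F)) (v : ι →₀ F) :
    f v = ∑ i ∈ v.support, v i • f (Finsupp.single i 1) := by
  conv_lhs => rw [← Finsupp.sum_single v, Finsupp.sum, map_sum]
  exact Finset.sum_congr rfl fun i _ => by rw [← Finsupp.smul_single_one, map_smul]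

lemma column_eq_zero {f : Module.End F (ι →₀ F)} {j : ι}
    (h : ∀ i, f (Finsupp.single j 1) i = 0) : f (Finsupp.single j 1) = 0 := by
  ext i; simpa using h i

namespace Finitary

variable {f g : Module.End F (ι →₀ F)}

lemma add (hf : Finitary F f) (hg : Finitary F g) : Finitary F (f + g) := by
  refine (hf.union hg).subset fun p hp => ?_
  by_contra h
  simp only [Set.mem_union, Set.mem_setOf_eq, not_or, not_not] at h
  exact hp (by simp [LinearMap.add_apply, Finsupp.add_apply, h.1, h.2])

lemma zero : Finitary F (0 : Module.End F (ι →₀ F)) := by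
  have h : {p : ι × ι | (0 : Module.End F (ι →₀ F)) (Finsupp.single p.2 1) p.1 ≠ 0} = ∅ := by
    ext p; simp
  unfold Finitary
  rw [h]
  exact Set.finite_empty

lemma smul (c : F) (hf : Finitary F f) : Finitary F (c • f) := by
  refine hf.subset fun p hp => ?_
  simp only [Set.mem_setOf_eq, LinearMap.smul_apply, Finsupp.smul_apply] at hp ⊢
  intro h
  exact hp (by simp [h])

lemma neg (hf : Finitary F f) : Finitary F (-f) := by
  refine hf.subset fun p hp => ?_
  simp only [Set.mem_setOf_eq, LinearMap.neg_apply, Finsupp.neg_apply, neg_ne_zero] at hp ⊢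
  exact hp

lemma sub (hf : Finitary F f) (hg : Finitary F g) : Finitary F (f - g) := by
  have h : f - g = f + -g := sub_eq_add_neg f g
  rw [h]
  exact hf.add hg.neg

lemma mul (hf : Finitary F f) (hg : Finitary F g) : Finitary F (f * g) := by
  refine ((hf.image Prod.fst).prod (hg.image Prod.snd)).subset ?_
  rintro ⟨k, l⟩ hkl
  simp only [Set.mem_setOf_eq, Module.End.mul_apply] at hkl
  constructor
  · -- k ∈ Prod.fst '' S_f
    by_contra hk
    apply hkl
    rw [end_apply_eq_sum f (g (Finsupp.single l 1)), Finset.sum_apply']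
    refine Finset.sum_eq_zero fun i _ => ?_
    have : f (Finsupp.single i 1) k = 0 := by
      by_contra h
      exact hk ⟨(k, i), h, rfl⟩
    simp [this]
  · -- l ∈ Prod.snd '' S_g
    by_contra hl
    apply hkl
    have : g (Finsupp.single l 1) = 0 := by
      refine column_eq_zero fun i => ?_
      by_contra h
      exact hl ⟨(i, l), h, rfl⟩
    rw [this, map_zero]
    simp

end Finitary

lemma trace_support_finite {f : Module.End F (ι →₀ F)} (hf : Finitary F f) :
    (Function.support fun j => f (Finsupp.single j 1) j).Finite :=
  (hf.image Prod.fst).subset fun j hj => ⟨(j, j), hj, rfl⟩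

lemma trF_add {f g : Module.End F (ι →₀ F)} (hf : Finitary F f) (hg : Finitary F g) :
    trF F (f + g) = trF F f + trF F g := by
  unfold trF
  rw [← finsum_add_distrib (trace_support_finite hf) (trace_support_finite hg)]
  simp [LinearMap.add_apply]

lemma trF_zero : trF F (0 : Module.End F (ι →₀ F)) = 0 := by
  unfold trF; simp

lemma trF_neg (f : Module.End F (ι →₀ F)) : trF F (-f) = -trF F f := by
  unfold trF
  rw [← finsum_neg_distrib]
  simp

lemma trF_sub {f g : Module.End F (ι →₀ F)} (hf : Finitary F f) (hg : Finitary F g) :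
    trF F (f - g) = trF F f - trF F g := by
  have h2 : f - g = f + -g := sub_eq_add_neg f g
  have h := trF_add hf hg.neg
  rw [trF_neg] at h
  rw [h2, h, sub_eq_add_neg]

lemma trF_smul (c : F) (f : Module.End F (ι →₀ F)) : trF F (c • f) = c * trF F f := by
  unfold trF
  rcases (Function.support fun j => f (Finsupp.single j 1) j).finite_or_infinite with h | h
  · rw [mul_finsum _ _]; simp
  · by_cases hc : c = 0
    · simp [hc]
    · have h2 : (Function.support fun j => (c • f) (Finsupp.single j 1) j).Infinite := by
        refine h.mono fun j hj => ?_
        simp only [Function.mem_support, LinearMap.smul_apply, Finsupp.smul_apply,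
          smul_eq_mul] at hj ⊢
        exact mul_ne_zero hc hj
      rw [finsum_of_infinite_support h, finsum_of_infinite_support h2, mul_zero]

end SL

section SL2

variable {F : Type*} [Field F] {ι : Type*}

lemma entry_formula {g : Module.End F (ι →₀ F)}
    (f : Module.End F (ι →₀ F)) (T : Finset ι)
    (hT : ∀ p : ι × ι, g (Finsupp.single p.2 1) p.1 ≠ 0 → p.1 ∈ T)
    (j k : ι) :
    (f * g) (Finsupp.single j 1) k = ∑ i ∈ T, g (Finsupp.single j 1) i * f (Finsupp.single i 1) k := by
  classical
  rw [Module.End.mul_apply, end_apply_eq_sum f (g (Finsupp.single j 1)), Finset.sum_apply']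
  rw [Finset.sum_subset (fun i hi => hT (i, j) (Finsupp.mem_support_iff.mp hi))]
  · exact Finset.sum_congr rfl fun i _ => by simp [smul_eq_mul]
  · intro i _ hi
    rw [Finsupp.notMem_support_iff.mp hi]
    simp

lemma trF_mul_comm {f g : Module.End F (ι →₀ F)} (hf : Finitary F f) (hg : Finitary F g) :
    trF F (f * g) = trF F (g * f) := by
  classical
  obtain ⟨T, hfT, hgT⟩ :
      ∃ T : Finset ι,
        (∀ p : ι × ι, f (Finsupp.single p.2 1) p.1 ≠ 0 → p.1 ∈ T ∧ p.2 ∈ T) ∧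
        (∀ p : ι × ι, g (Finsupp.single p.2 1) p.1 ≠ 0 → p.1 ∈ T ∧ p.2 ∈ T) := by
    refine ⟨(hf.toFinset ∪ hg.toFinset).biUnion fun p => {p.1, p.2}, fun p hp => ?_, fun p hp => ?_⟩
    · have hmem : p ∈ hf.toFinset ∪ hg.toFinset :=
        Finset.mem_union_left _ (hf.mem_toFinset.mpr hp)
      exact ⟨Finset.mem_biUnion.mpr ⟨p, hmem, by simp⟩, Finset.mem_biUnion.mpr ⟨p, hmem, by simp⟩⟩
    · have hmem : p ∈ hf.toFinset ∪ hg.toFinset :=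
        Finset.mem_union_right _ (hg.mem_toFinset.mpr hp)
      exact ⟨Finset.mem_biUnion.mpr ⟨p, hmem, by simp⟩, Finset.mem_biUnion.mpr ⟨p, hmem, by simp⟩⟩
  -- columns outside T vanish
  have hgcol : ∀ j, j ∉ T → g (Finsupp.single j 1) = 0 := fun j hj =>
    column_eq_zero fun i => by
      by_contra h
      exact hj ((hgT (i, j) h).2)
  have hfcol : ∀ j, j ∉ T → f (Finsupp.single j 1) = 0 := fun j hj =>
    column_eq_zero fun i => by
      by_contra h
      exact hj ((hfT (i, j) h).2)
  have hsupfg : (Function.support fun j => (f * g) (Finsupp.single j 1) j) ⊆ (T : Set ι) := by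
    intro j hj
    by_contra hjT
    apply hj
    simp [Module.End.mul_apply, hgcol j hjT]
  have hsupgf : (Function.support fun j => (g * f) (Finsupp.single j 1) j) ⊆ (T : Set ι) := by
    intro j hj
    by_contra hjT
    apply hj
    simp [Module.End.mul_apply, hfcol j hjT]
  rw [trF, trF, finsum_eq_finset_sum_of_support_subset _ hsupfg,
    finsum_eq_finset_sum_of_support_subset _ hsupgf]
  calc ∑ j ∈ T, (f * g) (Finsupp.single j 1) j
      = ∑ j ∈ T, ∑ i ∈ T, g (Finsupp.single j 1) i * f (Finsupp.single i 1) j :=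
        Finset.sum_congr rfl fun j _ => entry_formula f T (fun p hp => (hgT p hp).1) j j
    _ = ∑ i ∈ T, ∑ j ∈ T, g (Finsupp.single j 1) i * f (Finsupp.single i 1) j := Finset.sum_comm
    _ = ∑ i ∈ T, ∑ j ∈ T, f (Finsupp.single i 1) j * g (Finsupp.single j 1) i :=
        Finset.sum_congr rfl fun i _ => Finset.sum_congr rfl fun j _ => mul_comm _ _
    _ = ∑ i ∈ T, (g * f) (Finsupp.single i 1) i :=
        Finset.sum_congr rfl fun i _ => (entry_formula g T (fun p hp => (hfT p hp).1) i i).symm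

/-- The Lie algebra `sl_J(F)` of finitary trace-zero endomorphisms of `J →₀ F`. -/
def slJ (F : Type*) [Field F] (J : Type*) : LieSubalgebra F (Module.End F (J →₀ F)) where
  carrier := {f | Finitary F f ∧ trF F f = 0}
  add_mem' := fun {a b} ha hb => ⟨ha.1.add hb.1, by rw [trF_add ha.1 hb.1, ha.2, hb.2, add_zero]⟩
  zero_mem' := ⟨Finitary.zero, trF_zero⟩
  smul_mem' := fun c x hx => ⟨hx.1.smul c, by rw [trF_smul, hx.2, mul_zero]⟩
  lie_mem' := fun {x y} hx hy => by
    have hxy : ⁅x, y⁆ = x * y - y * x := Ring.lie_def x y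
    refine ⟨?_, ?_⟩
    · rw [Set.mem_setOf_eq] at *
      rw [hxy]
      exact (hx.1.mul hy.1).sub (hy.1.mul hx.1)
    · rw [hxy, trF_sub (hx.1.mul hy.1) (hy.1.mul hx.1), trF_mul_comm hx.1 hy.1, sub_self]

end SL2

section Aux
open scoped Classical
variable {F : Type*} [Field F] {J : Type*}

/-- Elementary matrix endomorphism: `v ↦ v j • e_i`. -/
noncomputable def Eend (F : Type*) [Field F] {J : Type*} (i j : J) : Module.End F (J →₀ F) :=
  (LinearMap.toSpanSingleton F (J →₀ F) (Finsupp.single i 1)).comp (Finsupp.lapply j)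

lemma Eend_apply (i j : J) (v : J →₀ F) : Eend F i j v = v j • Finsupp.single i 1 := rfl

lemma Eend_mul (i j k l : J) :
    Eend F i j * Eend F k l = if j = k then Eend F i l else 0 := by
  apply LinearMap.ext fun v => ?_
  by_cases h : j = k <;>
    simp [h, Module.End.mul_apply, Eend_apply, Finsupp.single_apply, eq_comm]

lemma finitary_Eend (i j : J) : Finitary F (Eend F i j) := by
  apply Set.Finite.subset (Set.finite_singleton (i, j))
  rintro ⟨a, b⟩ h
  simp only [Set.mem_setOf_eq, Eend_apply, Finsupp.smul_apply, Finsupp.single_apply,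
    smul_eq_mul] at h
  simp only [Set.mem_singleton_iff, Prod.mk.injEq]
  split_ifs at h <;> simp_all

lemma trF_Eend (i j : J) : trF F (Eend F i j) = if i = j then (1 : F) else 0 := by
  unfold trF
  have h : ∀ k, k ≠ j → Eend F i j (Finsupp.single k (1:F)) k = 0 := by
    intro k hk
    simp [Eend_apply, Finsupp.single_apply, hk]
  rw [finsum_eq_single _ j h]
  simp [Eend_apply, Finsupp.single_apply]

lemma mem_slJ {f : Module.End F (J →₀ F)} :
    f ∈ slJ F J ↔ Finitary F f ∧ trF F f = 0 := Iff.rfl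

/-- Off-diagonal elementary matrix as an element of `slJ`. -/
noncomputable def Eel (i j : J) (h : i ≠ j) : slJ F J :=
  ⟨Eend F i j, finitary_Eend i j, by rw [trF_Eend]; simp [h]⟩

/-- Diagonal difference `E_ii - E_jj` as an element of `slJ`. -/
noncomputable def Hel (i j : J) : slJ F J :=
  ⟨Eend F i i - Eend F j j, (finitary_Eend i i).sub (finitary_Eend j j), by
    rw [trF_sub (finitary_Eend i i) (finitary_Eend j j)]; simp [trF_Eend]⟩

@[simp] lemma Eel_coe (i j : J) (h : i ≠ j) : ((Eel i j h : slJ F J) : Module.End F (J →₀ F)) = Eend F i j := rfl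
@[simp] lemma Hel_coe (i j : J) : ((Hel i j : slJ F J) : Module.End F (J →₀ F)) = Eend F i i - Eend F j j := rfl

lemma slJ_fin (x : slJ F J) : Finitary F (x : Module.End F (J →₀ F)) := x.2.1
lemma slJ_tr (x : slJ F J) : trF F (x : Module.End F (J →₀ F)) = 0 := x.2.2

end Aux

/-- The trace form `κ (f, g) = tr (f ∘ g)` on `sl_J(F)`. -/
noncomputable def kappa (F : Type*) [Field F] (J : Type*) (f g : slJ F J) : F :=
  trF F ((f : Module.End F (J →₀ F)) * (g : Module.End F (J →₀ F)))

section Aux2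
open scoped Classical
variable {F : Type*} [Field F] {J : Type*}

lemma kappa_def (f g : slJ F J) :
    kappa F J f g = trF F ((f : Module.End F (J →₀ F)) * (g : Module.End F (J →₀ F))) := rfl

lemma kappa_comm (f g : slJ F J) : kappa F J f g = kappa F J g f :=
  trF_mul_comm (slJ_fin f) (slJ_fin g)

lemma kappa_add_left (x y z : slJ F J) :
    kappa F J (x + y) z = kappa F J x z + kappa F J y z := by
  rw [kappa_def, kappa_def, kappa_def]
  have : ((x + y : slJ F J) : Module.End F (J →₀ F)) = ↑x + ↑y := rfl
  rw [this, add_mul, trF_add ((slJ_fin x).mul (slJ_fin z)) ((slJ_fin y).mul (slJ_fin z))]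

lemma kappa_smul_left (c : F) (x z : slJ F J) :
    kappa F J (c • x) z = c * kappa F J x z := by
  rw [kappa_def, kappa_def]
  have : ((c • x : slJ F J) : Module.End F (J →₀ F)) = c • (x : Module.End F (J →₀ F)) := rfl
  rw [this, smul_mul_assoc, trF_smul]

lemma kappa_add_right (x y z : slJ F J) :
    kappa F J x (y + z) = kappa F J x y + kappa F J x z := by
  rw [kappa_comm, kappa_add_left, kappa_comm y x, kappa_comm z x]

lemma kappa_smul_right (c : F) (x z : slJ F J) :
    kappa F J x (c • z) = c * kappa F J x z := by
  rw [kappa_comm, kappa_smul_left, kappa_comm]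

lemma kappa_zero_left (z : slJ F J) : kappa F J 0 z = 0 := by
  have h := kappa_smul_left (0 : F) 0 z
  rw [zero_smul, zero_mul] at h
  exact h

lemma kappa_zero_right (z : slJ F J) : kappa F J z 0 = 0 := by
  rw [kappa_comm]; exact kappa_zero_left z

lemma kappa_neg_left (x z : slJ F J) : kappa F J (-x) z = -kappa F J x z := by
  have h := kappa_smul_left (-1 : F) x z
  rw [neg_one_smul, neg_one_mul] at h
  exact h

lemma kappa_neg_right (x z : slJ F J) : kappa F J x (-z) = -kappa F J x z := by
  rw [kappa_comm, kappa_neg_left, kappa_comm]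

lemma slJ_coe_bracket (x y : slJ F J) :
    ((⁅x, y⁆ : slJ F J) : Module.End F (J →₀ F)) = ↑x * ↑y - ↑y * ↑x := by
  rw [LieSubalgebra.coe_bracket, Ring.lie_def]

/-- Invariance of the trace form. -/
lemma kappa_inv (z x y : slJ F J) :
    kappa F J ⁅z, x⁆ y + kappa F J x ⁅z, y⁆ = 0 := by
  have hz := slJ_fin z
  have hx := slJ_fin x
  have hy := slJ_fin y
  rw [kappa_def, kappa_def, slJ_coe_bracket, slJ_coe_bracket]
  have e1 : ((z : Module.End F (J →₀ F)) * ↑x - ↑x * ↑z) * ↑y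
      = ↑z * ↑x * ↑y - ↑x * ↑z * ↑y := by exact sub_mul (α := Module.End F (J →₀ F)) _ _ _
  have e2 : (x : Module.End F (J →₀ F)) * (↑z * ↑y - ↑y * ↑z)
      = ↑x * (↑z * ↑y) - ↑x * (↑y * ↑z) := by exact mul_sub (α := Module.End F (J →₀ F)) _ _ _
  rw [e1, e2, trF_sub ((hz.mul hx).mul hy) ((hx.mul hz).mul hy),
    trF_sub (hx.mul (hz.mul hy)) (hx.mul (hy.mul hz))]
  have h1 : (x : Module.End F (J →₀ F)) * (↑z * ↑y) = ↑x * ↑z * ↑y := (mul_assoc _ _ _).symm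
  have h2 : (x : Module.End F (J →₀ F)) * (↑y * ↑z) = ↑x * ↑y * ↑z := (mul_assoc _ _ _).symm
  have h3 : (z : Module.End F (J →₀ F)) * ↑x * ↑y = ↑z * (↑x * ↑y) := mul_assoc _ _ _
  have h4 := trF_mul_comm hz (hx.mul hy)
  rw [h1, h2, h3, h4]
  ring_nf

lemma kappa_assoc (u w y : slJ F J) :
    kappa F J ⁅u, w⁆ y = kappa F J u ⁅w, y⁆ := by
  have h1 := kappa_inv w u y
  have h2 : (⁅w, u⁆ : slJ F J) = -⁅u, w⁆ := (lie_skew w u).symm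
  rw [h2, kappa_neg_left] at h1
  linear_combination -h1

section Gamma
variable [CharZero F] [Infinite J]

/-- The bilinear form `γ(f,g) = κ(Df,g) + κ(f,Dg)`. -/
noncomputable def gam (D : LieDerivation F (slJ F J) (slJ F J)) (f g : slJ F J) : F :=
  kappa F J (D f) g + kappa F J f (D g)

variable (D : LieDerivation F (slJ F J) (slJ F J))

lemma gam_comm (f g : slJ F J) : gam D f g = gam D g f := by
  rw [gam, gam, kappa_comm (D f) g, kappa_comm f (D g)]
  ring

lemma gam_add_left (x y z : slJ F J) :
    gam D (x + y) z = gam D x z + gam D y z := by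
  rw [gam, gam, gam, map_add, kappa_add_left, kappa_add_left]
  ring

lemma gam_smul_left (c : F) (x z : slJ F J) :
    gam D (c • x) z = c * gam D x z := by
  rw [gam, gam, map_smul, kappa_smul_left, kappa_smul_left]
  ring

lemma gam_zero_left (z : slJ F J) : gam D 0 z = 0 := by
  rw [gam, map_zero, kappa_zero_left, kappa_zero_left, add_zero]

lemma gam_add_right (x y z : slJ F J) :
    gam D x (y + z) = gam D x y + gam D x z := by
  rw [gam_comm, gam_add_left, gam_comm D y x, gam_comm D z x]

lemma gam_smul_right (c : F) (x z : slJ F J) :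
    gam D x (c • z) = c * gam D x z := by
  rw [gam_comm, gam_smul_left, gam_comm]

lemma gam_zero_right (z : slJ F J) : gam D z 0 = 0 := by
  rw [gam_comm]; exact gam_zero_left D z

/-- `γ` is an invariant form. -/
lemma gam_inv (z x y : slJ F J) :
    gam D ⁅z, x⁆ y + gam D x ⁅z, y⁆ = 0 := by
  have h1 := kappa_inv (D z) x y
  have h2 := kappa_inv z (D x) y
  have h3 := kappa_inv z x (D y)
  rw [gam, gam, D.apply_lie_eq_add, D.apply_lie_eq_add, kappa_add_left, kappa_add_right]
  linear_combination h1 + h2 + h3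

lemma gam_eq_zero_of_weight (z x y : slJ F J) (l m : F)
    (hx : ⁅z, x⁆ = l • x) (hy : ⁅z, y⁆ = m • y) (h : l + m ≠ 0) :
    gam D x y = 0 := by
  have h0 := gam_inv D z x y
  rw [hx, hy, gam_smul_left, gam_smul_right] at h0
  have : (l + m) * gam D x y = 0 := by linear_combination h0
  exact (mul_eq_zero.mp this).resolve_left h
end Gamma
end Aux2

section Aux3
open scoped Classical
variable {F : Type*} [Field F] {J : Type*}

lemma End_lie_def (x y : Module.End F (J →₀ F)) : ⁅x, y⁆ = x * y - y * x :=
  Ring.lie_def x y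

lemma lie_Eend_chain (a b c : J) (hca : ¬ c = a) :
    ⁅Eend F a b, Eend F b c⁆ = Eend F a c := by
  rw [End_lie_def, Eend_mul, Eend_mul, if_pos rfl, if_neg hca]
  exact sub_zero (Eend F a c)

lemma lie_Eend_2 (a b c : J) (hbc : ¬ b = c) :
    ⁅Eend F a b, Eend F c a⁆ = -(Eend F c b) := by
  rw [End_lie_def, Eend_mul, Eend_mul, if_neg hbc, if_pos rfl]
  exact zero_sub (Eend F c b)

lemma diag_comm (i k : J) : Eend F i i * Eend F k k = Eend F k k * Eend F i i := by
  rw [Eend_mul, Eend_mul]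
  by_cases h : i = k
  · subst h; rfl
  · rw [if_neg h, if_neg fun hh => h hh.symm]

lemma lie_diag_diag (w v c d : J) :
    ⁅Eend F w w - Eend F v v, Eend F c c - Eend F d d⁆ = 0 := by
  rw [End_lie_def]
  have s1 : (Eend F w w - Eend F v v) * (Eend F c c - Eend F d d)
      = Eend F w w * (Eend F c c - Eend F d d) - Eend F v v * (Eend F c c - Eend F d d) := by
    exact sub_mul (α := Module.End F (J →₀ F)) _ _ _
  have s2 : Eend F w w * (Eend F c c - Eend F d d)
      = Eend F w w * Eend F c c - Eend F w w * Eend F d d := by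
    exact mul_sub (α := Module.End F (J →₀ F)) _ _ _
  have s3 : Eend F v v * (Eend F c c - Eend F d d)
      = Eend F v v * Eend F c c - Eend F v v * Eend F d d := by
    exact mul_sub (α := Module.End F (J →₀ F)) _ _ _
  have s4 : (Eend F c c - Eend F d d) * (Eend F w w - Eend F v v)
      = Eend F c c * (Eend F w w - Eend F v v) - Eend F d d * (Eend F w w - Eend F v v) := by
    exact sub_mul (α := Module.End F (J →₀ F)) _ _ _
  have s5 : Eend F c c * (Eend F w w - Eend F v v)
      = Eend F c c * Eend F w w - Eend F c c * Eend F v v := by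
    exact mul_sub (α := Module.End F (J →₀ F)) _ _ _
  have s6 : Eend F d d * (Eend F w w - Eend F v v)
      = Eend F d d * Eend F w w - Eend F d d * Eend F v v := by
    exact mul_sub (α := Module.End F (J →₀ F)) _ _ _
  rw [s1, s2, s3, s4, s5, s6, diag_comm w c, diag_comm w d, diag_comm v c, diag_comm v d]
  exact sub_eq_zero_of_eq (sub_sub_sub_comm (α := Module.End F (J →₀ F)) _ _ _ _)

lemma lie_diag_Eend (w v a b : J) :
    ⁅Eend F w w - Eend F v v, Eend F a b⁆ =
      (((if w = a then (1:F) else 0) - (if b = w then 1 else 0)) -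
       ((if v = a then 1 else 0) - (if b = v then 1 else 0))) • Eend F a b := by
  rw [End_lie_def]
  have e1 : (Eend F w w - Eend F v v) * Eend F a b
      = Eend F w w * Eend F a b - Eend F v v * Eend F a b := by
    exact sub_mul (α := Module.End F (J →₀ F)) _ _ _
  have e2 : Eend F a b * (Eend F w w - Eend F v v)
      = Eend F a b * Eend F w w - Eend F a b * Eend F v v := by
    exact mul_sub (α := Module.End F (J →₀ F)) _ _ _
  rw [e1, e2, Eend_mul, Eend_mul, Eend_mul, Eend_mul]
  split_ifs <;> subst_vars <;> module

lemma Hel_lie_Eel (w v a b : J) (hab : a ≠ b) :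
    ⁅(Hel w v : slJ F J), (Eel a b hab : slJ F J)⁆ =
      (((if w = a then (1:F) else 0) - (if b = w then 1 else 0)) -
       ((if v = a then 1 else 0) - (if b = v then 1 else 0))) • (Eel a b hab : slJ F J) :=
  Subtype.ext (lie_diag_Eend w v a b)

lemma Hel_lie_Hel (w v c d : J) :
    ⁅(Hel w v : slJ F J), (Hel c d : slJ F J)⁆ = 0 :=
  Subtype.ext (lie_diag_diag w v c d)

lemma Eel_chain (a b c : J) (hab : a ≠ b) (hbc : b ≠ c) (hac : a ≠ c) :
    ⁅(Eel a b hab : slJ F J), (Eel b c hbc : slJ F J)⁆ = (Eel a c hac : slJ F J) :=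
  Subtype.ext (lie_Eend_chain a b c fun h => hac h.symm)

lemma Eel_lie2 (a b c : J) (hab : a ≠ b) (hca : c ≠ a) (hcb : c ≠ b) :
    ⁅(Eel a b hab : slJ F J), (Eel c a hca : slJ F J)⁆ = -(Eel c b hcb : slJ F J) :=
  Subtype.ext (lie_Eend_2 a b c fun h => hcb h.symm)

lemma Hel_eq_lie (a b : J) (hab : a ≠ b) :
    ⁅(Eel a b hab : slJ F J), (Eel b a hab.symm : slJ F J)⁆ = (Hel a b : slJ F J) := by
  apply Subtype.ext
  show ⁅Eend F a b, Eend F b a⁆ = Eend F a a - Eend F b b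
  rw [End_lie_def, Eend_mul, Eend_mul, if_pos rfl, if_pos rfl]

lemma Hel_self (a : J) : (Hel a a : slJ F J) = 0 := by
  apply Subtype.ext
  show Eend F a a - Eend F a a = 0
  exact sub_self (Eend F a a)

section Coc
variable [CharZero F] [Infinite J] (D : LieDerivation F (slJ F J) (slJ F J))

noncomputable def phi (i j : J) (h : i ≠ j) : F :=
  kappa F J (D (Eel i j h)) (Eel j i h.symm)

lemma phi_cocycle (i j k : J) (hij : i ≠ j) (hik : i ≠ k) (hkj : k ≠ j) :
    phi D i j hij = phi D i k hik + phi D k j hkj := by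
  have hE : (Eel i j hij : slJ F J) = ⁅Eel i k hik, Eel k j hkj⁆ :=
    (Eel_chain i k j hik hkj hij).symm
  rw [phi, hE, D.apply_lie_eq_add, kappa_add_left]
  have t1 : kappa F J ⁅D (Eel i k hik), (Eel k j hkj : slJ F J)⁆ (Eel j i hij.symm)
      = phi D i k hik := by
    rw [kappa_assoc, Eel_chain k j i hkj hij.symm hik.symm]
    rfl
  have t2 : kappa F J ⁅(Eel i k hik : slJ F J), D (Eel k j hkj)⁆ (Eel j i hij.symm)
      = phi D k j hkj := by
    have h0 := kappa_inv (Eel i k hik) (D (Eel k j hkj)) (Eel j i hij.symm)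
    rw [Eel_lie2 i k j hik hij.symm hkj.symm, kappa_neg_right] at h0
    have hphi : phi D k j hkj = kappa F J (D (Eel k j hkj)) (Eel j k hkj.symm) := rfl
    rw [hphi]
    linear_combination h0
  rw [t1, t2]
  ring

lemma phi_pair_zero (j k : J) (hjk : j ≠ k) :
    phi D j k hjk + phi D k j hjk.symm = 0 := by
  obtain ⟨i, hi⟩ := Infinite.exists_notMem_finset ({j, k} : Finset J)
  simp only [Finset.mem_insert, Finset.mem_singleton, not_or] at hi
  have hij : i ≠ j := hi.1
  have hik : i ≠ k := hi.2
  have h1 := phi_cocycle D i j k hij hik hjk.symm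
  have h2 := phi_cocycle D i k j hik hij hjk
  linear_combination -h1 - h2

lemma gam_Eel_transpose (j k : J) (hjk : j ≠ k) :
    gam D (Eel j k hjk) (Eel k j hjk.symm) = 0 := by
  rw [gam, kappa_comm (Eel j k hjk) (D (Eel k j hjk.symm))]
  exact phi_pair_zero D j k hjk

lemma gam_Eel_Eel (a b c d : J) (hab : a ≠ b) (hcd : c ≠ d) :
    gam D (Eel a b hab) (Eel c d hcd) = 0 := by
  by_cases htr : c = b ∧ d = a
  · obtain ⟨rfl, rfl⟩ := htr
    exact gam_Eel_transpose D _ _ hab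
  · by_cases hda : d = a
    · subst hda
      have hcb : c ≠ b := fun h => htr ⟨h, rfl⟩
      obtain ⟨v, hv⟩ := Infinite.exists_notMem_finset ({d, b, c} : Finset J)
      simp only [Finset.mem_insert, Finset.mem_singleton, not_or] at hv
      obtain ⟨hvd, hvb, hvc⟩ := hv
      refine gam_eq_zero_of_weight D (Hel c v) _ _ _ _
        (Hel_lie_Eel c v d b hab) (Hel_lie_Eel c v c d hcd) ?_
      split_ifs <;> (try subst_vars) <;> (try contradiction) <;> norm_num
    · obtain ⟨v, hv⟩ := Infinite.exists_notMem_finset ({a, b, c, d} : Finset J)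
      simp only [Finset.mem_insert, Finset.mem_singleton, not_or] at hv
      obtain ⟨hva, hvb, hvc, hvd⟩ := hv
      refine gam_eq_zero_of_weight D (Hel a v) _ _ _ _
        (Hel_lie_Eel a v a b hab) (Hel_lie_Eel a v c d hcd) ?_
      split_ifs <;> (try subst_vars) <;> (try contradiction) <;> norm_num

lemma gam_Eel_Hel (a b c d : J) (hab : a ≠ b) :
    gam D (Eel a b hab) (Hel c d) = 0 := by
  obtain ⟨v, hv⟩ := Infinite.exists_notMem_finset ({a, b} : Finset J)
  simp only [Finset.mem_insert, Finset.mem_singleton, not_or] at hv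
  obtain ⟨hva, hvb⟩ := hv
  refine gam_eq_zero_of_weight D (Hel a v) _ _ _ (0 : F)
    (Hel_lie_Eel a v a b hab) (by rw [zero_smul]; exact Hel_lie_Hel a v c d) ?_
  split_ifs <;> (try subst_vars) <;> (try contradiction) <;> norm_num

lemma gam_Hel_Eel (a b c d : J) (hcd : c ≠ d) :
    gam D (Hel a b) (Eel c d hcd) = 0 := by
  rw [gam_comm]; exact gam_Eel_Hel D c d a b hcd

lemma gam_Hel_Hel (a b c d : J) : gam D (Hel a b) (Hel c d) = 0 := by
  by_cases hab0 : a = b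
  · subst hab0
    rw [Hel_self]
    exact gam_zero_left D _
  · have hab : a ≠ b := hab0
    have h0 := gam_inv D (Eel a b hab) (Eel b a hab.symm) (Hel c d)
    rw [Hel_eq_lie a b hab] at h0
    have hbr : ⁅(Eel a b hab : slJ F J), (Hel c d : slJ F J)⁆ =
        (-((((if c = a then (1:F) else 0) - (if b = c then 1 else 0)) -
          ((if d = a then 1 else 0) - (if b = d then 1 else 0))))) • (Eel a b hab : slJ F J) := by
      rw [← lie_skew, Hel_lie_Eel c d a b hab, neg_smul]
    rw [hbr, gam_smul_right] at h0
    have ht : gam D (Eel b a hab.symm) (Eel a b hab) = 0 := gam_Eel_transpose D b a hab.symm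
    rw [ht, mul_zero, add_zero] at h0
    exact h0
end Coc
end Aux3

section Span
open scoped Classical
variable {F : Type*} [Field F] {J : Type*}

/-- The spanning set of `slJ`: off-diagonal elementary matrices and diagonal differences. -/
def Bset (F : Type*) [Field F] (J : Type*) : Set (slJ F J) :=
  {x | (∃ i j, ∃ h : i ≠ j, x = Eel i j h) ∨ ∃ i j, x = Hel i j}

lemma slJ_decomp [Infinite J] (x : slJ F J) : x ∈ Submodule.span F (Bset F J) := by
  classical
  have hfin : Finitary F (x : Module.End F (J →₀ F)) := slJ_fin x
  have htr : trF F (x : Module.End F (J →₀ F)) = 0 := slJ_tr x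
  set f : Module.End F (J →₀ F) := (x : Module.End F (J →₀ F)) with hfdef
  set S : Finset (J × J) := hfin.toFinset with hSdef
  have hmemS : ∀ p : J × J, p ∈ S ↔ f (Finsupp.single p.2 1) p.1 ≠ 0 := fun p =>
    hfin.mem_toFinset
  -- coefficientwise description of f
  have coeff : ∀ (i j : J),
      (∑ p ∈ S, f (Finsupp.single p.2 1) p.1 • Eend F p.1 p.2) (Finsupp.single j 1) i
        = f (Finsupp.single j 1) i := by
    intro i j
    rw [LinearMap.sum_apply, Finset.sum_apply']
    have h1 : ∀ p ∈ S, (f (Finsupp.single p.2 1) p.1 • Eend F p.1 p.2) (Finsupp.single j 1) i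
        = if p = (i, j) then f (Finsupp.single j 1) i else 0 := by
      rintro ⟨a, b⟩ -
      simp only [LinearMap.smul_apply, Eend_apply, Finsupp.smul_apply, Finsupp.single_apply,
        smul_eq_mul, Prod.mk.injEq]
      split_ifs <;> simp_all
    rw [Finset.sum_congr rfl h1, Finset.sum_ite_eq' S (i, j) fun _ => f (Finsupp.single j 1) i]
    split_ifs with h
    · rfl
    · symm
      by_contra hne
      exact h ((hmemS (i, j)).mpr hne)
  have hfe : f = ∑ p ∈ S, f (Finsupp.single p.2 1) p.1 • Eend F p.1 p.2 := by
    apply Finsupp.lhom_ext fun j b => ?_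
    have hb : (Finsupp.single j b : J →₀ F) = b • Finsupp.single j 1 := by
      rw [Finsupp.smul_single, smul_eq_mul, mul_one]
    rw [hb, map_smul, map_smul]
    congr 1
    ext i
    exact (coeff i j).symm
  -- split into off-diagonal and diagonal parts
  set So : Finset (J × J) := S.filter (fun p => p.1 ≠ p.2) with hSo
  set Sd : Finset (J × J) := S \ So with hSd
  have hSdmem : ∀ p ∈ Sd, p.2 = p.1 := by
    intro p hp
    obtain ⟨hpS, hpn⟩ := Finset.mem_sdiff.mp hp
    by_contra hne
    exact hpn (Finset.mem_filter.mpr ⟨hpS, fun h => hne h.symm⟩)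
  have hsplit : f = (∑ p ∈ So, f (Finsupp.single p.2 1) p.1 • Eend F p.1 p.2)
      + ∑ p ∈ Sd, f (Finsupp.single p.2 1) p.1 • Eend F p.1 p.2 := by
    conv_lhs => rw [hfe]
    exact (Finset.sum_sdiff (Finset.filter_subset _ S)).symm.trans (add_comm _ _)
  set T : Finset J := Sd.image Prod.fst with hT
  have hdiag : ∑ p ∈ Sd, f (Finsupp.single p.2 1) p.1 • Eend F p.1 p.2
      = ∑ i ∈ T, f (Finsupp.single i 1) i • Eend F i i := by
    have hinj : ∀ p ∈ Sd, ∀ q ∈ Sd, p.1 = q.1 → p = q := by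
      intro p hp q hq hpq
      exact Prod.ext hpq (by rw [hSdmem p hp, hSdmem q hq, hpq])
    rw [hT, Finset.sum_image hinj]
    apply Finset.sum_congr rfl
    intro p hp
    rw [hSdmem p hp]
  have hTr : ∑ i ∈ T, f (Finsupp.single i 1) i = 0 := by
    have hsupp : (Function.support fun j => f (Finsupp.single j 1) j) ⊆ ↑T := by
      intro j hj
      have hjS : (j, j) ∈ S := (hmemS (j, j)).mpr hj
      have hjSd : (j, j) ∈ Sd := Finset.mem_sdiff.mpr
        ⟨hjS, fun hmem => (Finset.mem_filter.mp hmem).2 rfl⟩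
      exact Finset.mem_coe.mpr (Finset.mem_image.mpr ⟨(j, j), hjSd, rfl⟩)
    have htr' : ∑ᶠ j, f (Finsupp.single j 1) j = 0 := htr
    rw [finsum_eq_finset_sum_of_support_subset _ hsupp] at htr'
    exact htr'
  obtain ⟨i0, hi0⟩ := Infinite.exists_notMem_finset T
  have hdiag2 : ∑ i ∈ T, f (Finsupp.single i 1) i • Eend F i i
      = ∑ i ∈ T, f (Finsupp.single i 1) i • (Eend F i i - Eend F i0 i0) := by
    have e : ∑ i ∈ T, f (Finsupp.single i 1) i • (Eend F i i - Eend F i0 i0)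
        = ∑ i ∈ T, (f (Finsupp.single i 1) i • Eend F i i
            - f (Finsupp.single i 1) i • Eend F i0 i0) :=
      Finset.sum_congr rfl fun i _ => by
        exact smul_sub (A := Module.End F (J →₀ F)) _ _ _
    have e2 : ∑ i ∈ T, (f (Finsupp.single i 1) i • Eend F i i
            - f (Finsupp.single i 1) i • Eend F i0 i0)
        = ∑ i ∈ T, f (Finsupp.single i 1) i • Eend F i i
          - ∑ i ∈ T, f (Finsupp.single i 1) i • Eend F i0 i0 := by
      exact Finset.sum_sub_distrib (G := Module.End F (J →₀ F)) _ _
    have e3 : ∑ i ∈ T, f (Finsupp.single i 1) i • Eend F i0 i0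
        = (∑ i ∈ T, f (Finsupp.single i 1) i) • Eend F i0 i0 := by
      exact (Finset.sum_smul).symm
    have e4 : ((∑ i ∈ T, f (Finsupp.single i 1) i) • Eend F i0 i0 : Module.End F (J →₀ F))
        = 0 := by
      rw [hTr]
      exact zero_smul F _
    rw [e, e2, e3, e4]
    exact (sub_zero (G := Module.End F (J →₀ F)) _).symm
  have hSomem : ∀ p : J × J, p ∈ So → p.1 ≠ p.2 := fun p hp => (Finset.mem_filter.mp hp).2
  -- the corresponding element of slJ
  set y : slJ F J :=
    (∑ p ∈ So.attach, f (Finsupp.single p.1.2 1) p.1.1 • Eel p.1.1 p.1.2 (hSomem p.1 p.2))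
      + ∑ i ∈ T, f (Finsupp.single i 1) i • Hel i i0 with hy
  have hyspan : y ∈ Submodule.span F (Bset F J) := by
    apply Submodule.add_mem
    · apply Submodule.sum_mem
      intro p _
      exact Submodule.smul_mem _ _
        (Submodule.subset_span (Or.inl ⟨p.1.1, p.1.2, hSomem p.1 p.2, rfl⟩))
    · apply Submodule.sum_mem
      intro i _
      exact Submodule.smul_mem _ _ (Submodule.subset_span (Or.inr ⟨i, i0, rfl⟩))
  have hxy : x = y := by
    apply Subtype.ext
    have hycoe : (y : Module.End F (J →₀ F))
        = (∑ p ∈ So.attach, f (Finsupp.single p.1.2 1) p.1.1 • Eend F p.1.1 p.1.2)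
          + ∑ i ∈ T, f (Finsupp.single i 1) i • (Eend F i i - Eend F i0 i0) := by
      rw [hy]
      push_cast
      rfl
    rw [hycoe, Finset.sum_attach So
      (fun p => f (Finsupp.single p.2 1) p.1 • Eend F p.1 p.2), ← hdiag2, ← hdiag]
    exact hsplit
  rw [hxy]
  exact hyspan

end Span

/-- The trace form `κ (f, g) = tr (f ∘ g)` on `sl_J(F)` (with `F` of characteristic
zero and `J` infinite) is invariant under every derivation `D` of `sl_J(F)`:
`κ (D f, g) + κ (f, D g) = 0`. -/
theorem traceForm_slJ_invariant_under_derivations (F : Type*) [Field F] [CharZero F]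
    (J : Type*) [Infinite J]
    (D : LieDerivation F (slJ F J) (slJ F J)) (f g : slJ F J) :
    kappa F J (D f) g + kappa F J f (D g) = 0 := by
  have hf := slJ_decomp f
  have hg := slJ_decomp g
  have base : ∀ x ∈ Bset F J, ∀ y ∈ Bset F J, gam D x y = 0 := by
    rintro x (⟨i, j, hij, rfl⟩ | ⟨i, j, rfl⟩) y (⟨k, l, hkl, rfl⟩ | ⟨k, l, rfl⟩)
    · exact gam_Eel_Eel D i j k l hij hkl
    · exact gam_Eel_Hel D i j k l hij
    · exact gam_Hel_Eel D i j k l hkl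
    · exact gam_Hel_Hel D i j k l
  have key : gam D f g = 0 := by
    refine Submodule.span_induction (p := fun z _ => gam D z g = 0) ?_ ?_ ?_ ?_ hf
    · intro z hz
      refine Submodule.span_induction (p := fun w _ => gam D z w = 0) ?_ ?_ ?_ ?_ hg
      · exact fun w hw => base z hz w hw
      · exact gam_zero_right D z
      · intro u v _ _ h1 h2
        rw [gam_add_right, h1, h2, add_zero]
      · intro a u _ h1
        rw [gam_smul_right, h1, mul_zero]
    · exact gam_zero_left D g
    · intro u v _ _ h1 h2
      rw [gam_add_left, h1, h2, add_zero]
    · intro a u _ h1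
      rw [gam_smul_left, h1, mul_zero]
  exact key
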